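/- Let R be a finite commutative chain ring. A cyclic code C ⊆ R^n (with gcd(n, char(R/J(R))) = 1) is LCD with respect to the Euclidean inner product if and only if C = ⟨e⟩ for an idempotent e of the group ring RC_n with e* = e. -/

import Mathlib

open Finset

/-- Multiplication of the twisted group ring `R^{γ_λ} C_n`, where the cyclic
group `C_n` is identified with `Fin n` (additively), elements are coefficient
vectors `Fin n → R`, and `γ_λ(gⁱ,gʲ) = 1` if `i+j < n`, `λ` if `i+j ≥ n`. -/
def ctMul {R : Type*} [CommRing R] {n : ℕ} (lam : Rˣ) (f h : Fin n → R) :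
    Fin n → R :=
  fun k => ∑ i : Fin n, ∑ j : Fin n,
    if i + j = k then (if (i : ℕ) + (j : ℕ) < n then 1 else (lam : R)) * (f i * h j) else 0

/-- The classical involution on `R^{γ_λ} C_n`: `Σ αᵢ ḡⁱ ↦ Σ αᵢ ḡ⁻ⁱ`
(in coefficient form, using `ḡ⁻ⁱ = λ⁻¹ ḡ^{n-i}` for `i ≠ 0`). -/
def ctStar {R : Type*} [CommRing R] {n : ℕ} [NeZero n] (lam : Rˣ) (f : Fin n → R) :
    Fin n → R :=
  fun j => (if j = 0 then 1 else ((lam⁻¹ : Rˣ) : R)) * f (-j)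

/-- The cyclic shift `(c_0,…,c_{n-1}) ↦ (c_{n-1}, c_0, …, c_{n-2})`. -/
def cycShift {R : Type*} [CommRing R] {n : ℕ} [NeZero n] (c : Fin n → R) :
    Fin n → R :=
  fun i => c (i - 1)

set_option linter.unusedSectionVars false
set_option linter.unusedVariables false


namespace LCDAux

/-- annihilator of a single element, as an ideal -/
def ann {A : Type*} [CommRing A] (a : A) : Ideal A where
  carrier := {x | x * a = 0}
  add_mem' := by intro x y hx hy; simp only [Set.mem_setOf_eq] at *; rw [add_mul, hx, hy, add_zero]
  zero_mem' := by simp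
  smul_mem' := by intro c x hx; simp only [Set.mem_setOf_eq, smul_eq_mul] at *
                  rw [mul_assoc, hx, mul_zero]

@[simp] lemma mem_ann {A : Type*} [CommRing A] {a x : A} : x ∈ ann a ↔ x * a = 0 := Iff.rfl

variable {A : Type*} [CommRing A] [Finite A]

lemma exists_stable_pow (C : Ideal A) : ∃ k : ℕ, 1 ≤ k ∧ C ^ (2 * k) = C ^ k := by
  have hfin : Finite (Ideal A) :=
    Finite.of_injective (fun I : Ideal A => (I : Set A)) SetLike.coe_injective
  obtain ⟨a, b, hab, h⟩ := Finite.exists_ne_map_eq_of_infinite (fun m : ℕ => C ^ (m + 1))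
  wlog hlt : a < b generalizing a b
  · exact this b a hab.symm h.symm (by omega)
  set k := a + 1 with hk
  set d := b - a with hd
  have hdpos : 1 ≤ d := by omega
  have hstep : C ^ k = C ^ (k + d) := by
    have : k + d = b + 1 := by omega
    rw [this]; exact h
  have hper : ∀ t : ℕ, C ^ k = C ^ (k + t * d) := by
    intro t
    induction t with
    | zero => simp
    | succ t ih =>
      have : k + (t + 1) * d = (k + t * d) + d := by ring
      rw [this, pow_add C (k + t * d) d, ← ih, ← pow_add, ← hstep]
  refine ⟨k, by omega, ?_⟩
  have h1 : C ^ (k + k * d) ≤ C ^ (2 * k) := Ideal.pow_le_pow_right (by nlinarith)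
  have h2 : C ^ (2 * k) ≤ C ^ k := Ideal.pow_le_pow_right (by omega)
  exact le_antisymm h2 (by rw [hper k] ; exact h1)

lemma exists_idem (C : Ideal A) :
    ∃ (k : ℕ) (e : A), 1 ≤ k ∧ e * e = e ∧ C ^ k = Ideal.span {e} := by
  obtain ⟨k, hk, hCk⟩ := exists_stable_pow C
  set I := C ^ k with hI
  have hI2 : I * I = I := by rw [hI, ← pow_add]; rw [show k + k = 2 * k by ring, hCk]
  have hfg : I.FG := IsNoetherian.noetherian I
  have hle : I ≤ I • I := by rw [Ideal.smul_eq_mul, hI2]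
  obtain ⟨r, hr1, hr0⟩ :=
    Submodule.exists_sub_one_mem_and_smul_eq_zero_of_fg_of_le_smul I I hfg hle
  set e := 1 - r with he
  have heI : e ∈ I := by
    have : -(r - 1) ∈ I := I.neg_mem hr1
    simpa [he] using this
  have he2 : e * e = e := by
    have h0 : r • e = 0 := hr0 e heI
    rw [smul_eq_mul] at h0
    have : e * e - e = -(r * e) := by rw [he]; ring
    rw [h0, neg_zero] at this
    exact sub_eq_zero.mp this
  refine ⟨k, e, hk, he2, le_antisymm ?_ ?_⟩
  · intro x hx
    have h0 : r • x = 0 := hr0 x hx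
    rw [smul_eq_mul] at h0
    have hx2 : x = e * x := by rw [he]; rw [sub_mul, one_mul, h0, sub_zero]
    exact Ideal.mem_span_singleton.mpr ⟨x, hx2⟩
  · rw [Ideal.span_le, Set.singleton_subset_iff]; exact heI

lemma machine (s : A →+* A) (C : Ideal A)
    (H : ∀ x ∈ C, (∀ c ∈ C, x * s c = 0) → x = 0)
    (e : A) (heC : e ∈ C)
    (hse : s e * s e = s e)
    (hD : ∀ c ∈ C, c - c * e ∈ nilradical A)
    (G : Ideal A) (hGC : G ≤ C) (hGe : ∀ x ∈ G, x * s e = 0) : G = ⊥ := by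
  classical
  by_contra hG
  set N := nilradical A with hN
  obtain ⟨m, hm⟩ := IsNoetherianRing.isNilpotent_nilradical A
  have hP : ∃ j, N ^ j * G = ⊥ := ⟨m, by rw [hN, hm, Ideal.zero_eq_bot, Ideal.bot_mul]⟩
  set j0 := Nat.find hP with hj0def
  have hj0 : N ^ j0 * G = ⊥ := Nat.find_spec hP
  have hj0ne : j0 ≠ 0 := by
    intro h
    rw [h, pow_zero, Ideal.one_eq_top, Ideal.top_mul] at hj0
    exact hG hj0
  have hlt : ¬(N ^ (j0 - 1) * G = ⊥) := Nat.find_min hP (by omega)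
  obtain ⟨x, hxmem, hx0⟩ := (Submodule.ne_bot_iff _).mp hlt
  have hxG : x ∈ G := Ideal.mul_le_right hxmem
  have hxN : ∀ ν ∈ N, x * ν = 0 := by
    intro ν hν
    have h1 : ν * x ∈ N * (N ^ (j0 - 1) * G) := Ideal.mul_mem_mul hν hxmem
    have h2 : N * (N ^ (j0 - 1) * G) = N ^ j0 * G := by
      rw [← mul_assoc, ← pow_succ', Nat.sub_add_cancel (by omega)]
    rw [h2, hj0] at h1
    rw [mul_comm]
    exact (Submodule.mem_bot A).mp h1
  refine hx0 (H x (hGC hxG) ?_)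
  intro c hc
  have h1 : x * s (c * e) = 0 := by
    rw [map_mul, show x * (s c * s e) = x * s e * s c by ring, hGe x hxG, zero_mul]
  have h2 : x * s (c - c * e) = 0 := by
    refine hxN _ ?_
    obtain ⟨t, ht⟩ := hD c hc
    have ht' : (c - c * e) ^ t = 0 := by simpa using ht
    refine mem_nilradical.mpr ⟨t, ?_⟩
    rw [← map_pow, ht', map_zero]
  have h3 : x * s c = x * s (c * e) + x * s (c - c * e) := by
    rw [map_sub, map_mul]; ring
  rw [h3, h1, h2, add_zero]

theorem abstract_LCD (s : A →+* A) (hs : Function.Involutive s) (C : Ideal A)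
    (H : ∀ x ∈ C, (∀ c ∈ C, x * s c = 0) → x = 0) :
    ∃ e : A, e * e = e ∧ s e = e ∧ C = Ideal.span {e} := by
  obtain ⟨k, e, hk, he2, hIk⟩ := exists_idem C
  have heC : e ∈ C := by
    have : e ∈ C ^ k := by rw [hIk]; exact Ideal.mem_span_singleton_self e
    exact Ideal.pow_le_self (n := k) (by omega) this
  have hD : ∀ c ∈ C, c - c * e ∈ nilradical A := by
    intro c hc
    refine mem_nilradical.mpr ⟨k, ?_⟩
    have h1 : (c - c * e) ^ k ∈ C ^ k :=
      Ideal.pow_mem_pow (C.sub_mem hc (C.mul_mem_right e hc)) k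
    rw [hIk, Ideal.mem_span_singleton] at h1
    obtain ⟨b, hb⟩ := h1
    have hkill : (c - c * e) * e = 0 := by rw [sub_mul, mul_assoc, he2, sub_self]
    have h2 : (c - c * e) ^ k = (c - c * e) ^ k * e := by
      rw [hb]; rw [show e * b * e = e * e * b by ring, he2]
    have h3 : (c - c * e) ^ k * e = 0 := by
      rw [show k = (k - 1) + 1 by omega, pow_succ, mul_assoc, hkill, mul_zero]
    rw [h2, h3]
  have hsee : s e * s e = s e := by rw [← map_mul, he2]
  -- Application 1 : C ≤ "multiples of s e"
  have app1 : ∀ (C' : Ideal A)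
      (_ : ∀ x ∈ C', (∀ c ∈ C', x * s c = 0) → x = 0)
      (e' : A) (_ : e' * e' = e') (_ : e' ∈ C')
      (_ : s e' * s e' = s e')
      (_ : ∀ c ∈ C', c - c * e' ∈ nilradical A),
      ∀ c ∈ C', c = c * s e' := by
    intro C' H' e' he2' heC' hse' hD'
    have hG : C' * Ideal.span {1 - s e'} = ⊥ := by
      refine machine s C' H' e' heC' hse' hD' _ Ideal.mul_le_left ?_
      intro x hx
      suffices hle : C' * Ideal.span {1 - s e'} ≤ ann (s e') by
        exact mem_ann.mp (hle hx)
      rw [Ideal.mul_le]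
      intro r hr t ht
      obtain ⟨u, hu⟩ := Ideal.mem_span_singleton.mp ht
      have : (1 - s e') * s e' = 0 := by rw [sub_mul, one_mul, hse', sub_self]
      rw [mem_ann, hu, show r * ((1 - s e') * u) * s e' = r * u * ((1 - s e') * s e') by ring,
        this, mul_zero]
    intro c hc
    have : c * (1 - s e') ∈ C' * Ideal.span {1 - s e'} :=
      Ideal.mul_mem_mul hc (Ideal.mem_span_singleton_self _)
    rw [hG, Submodule.mem_bot] at this
    have h0 : c - c * s e' = 0 := by rw [← this]; ring
    exact (sub_eq_zero.mp h0)
  have hssurj : Function.Surjective s := hs.surjective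
  set C2 := Ideal.map s C with hC2
  have hmem2 : ∀ x, x ∈ C2 ↔ ∃ y, y ∈ C ∧ s y = x := fun x =>
    Ideal.mem_map_iff_of_surjective s hssurj
  have H2 : ∀ x ∈ C2, (∀ c ∈ C2, x * s c = 0) → x = 0 := by
    intro x hx hall
    obtain ⟨y, hy, rfl⟩ := (hmem2 x).mp hx
    have hy0 : y = 0 := by
      refine H y hy ?_
      intro d hd
      have hsd : s d ∈ C2 := Ideal.mem_map_of_mem s hd
      have h0 := hall (s d) hsd
      rw [hs d] at h0
      calc y * s d = s (s y * d) := by rw [map_mul, hs y]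
        _ = 0 := by rw [h0, map_zero]
    rw [hy0, map_zero]
  have heC2 : s e ∈ C2 := Ideal.mem_map_of_mem s heC
  have hsee2 : s (s e) * s (s e) = s (s e) := by rw [hs e]; exact he2
  have hD2 : ∀ c ∈ C2, c - c * s e ∈ nilradical A := by
    intro c hc
    obtain ⟨y, hy, rfl⟩ := (hmem2 c).mp hc
    obtain ⟨t, ht⟩ := hD y hy
    have ht' : (y - y * e) ^ t = 0 := by simpa using ht
    refine mem_nilradical.mpr ⟨t, ?_⟩
    have hh : s y - s y * s e = s (y - y * e) := by rw [map_sub, map_mul]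
    rw [hh, ← map_pow, ht', map_zero]
  have h1 : ∀ c ∈ C, c = c * s e := app1 C H e he2 heC hsee hD
  have h2' : ∀ c ∈ C2, c = c * s (s e) :=
    app1 C2 H2 (s e) (by rw [← map_mul, he2]) heC2 hsee2 hD2
  have hes : s e = e := by
    have hA : e = e * s e := h1 e heC
    have hB : s e = s e * e := by have hx := h2' (s e) heC2; rwa [hs e] at hx
    rw [hB, mul_comm, ← hA]
  have hG2 : C ⊓ ann e = ⊥ := by
    refine machine s C H e heC hsee hD _ inf_le_left ?_
    intro x hx
    rw [hes]
    exact mem_ann.mp (Submodule.mem_inf.mp hx).2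
  refine ⟨e, he2, hes, le_antisymm ?_ ?_⟩
  · intro c hc
    have hin : c - c * e ∈ C ⊓ ann e := by
      refine Submodule.mem_inf.mpr ⟨C.sub_mem hc (C.mul_mem_right e hc), ?_⟩
      rw [mem_ann, sub_mul, mul_assoc, he2, sub_self]
    rw [hG2, Submodule.mem_bot] at hin
    have hce : c = c * e := sub_eq_zero.mp hin
    exact Ideal.mem_span_singleton.mpr ⟨c, by rw [mul_comm]; exact hce⟩
  · rw [Ideal.span_le, Set.singleton_subset_iff]; exact heC

end LCDAux

namespace LCDC

variable {R : Type*} [CommRing R] {n : ℕ} [NeZero n]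

/-- convolution product -/
def conv (f g : Fin n → R) : Fin n → R := fun k => ∑ i : Fin n, f i * g (k - i)

/-- delta at 0 -/
def one' : Fin n → R := fun i => if i = 0 then 1 else 0

/-- the involution -/
def st (f : Fin n → R) : Fin n → R := fun j => f (-j)

lemma ctMul_eq (f g : Fin n → R) : ctMul 1 f g = conv f g := by
  funext k
  simp only [ctMul, conv, Units.val_one, ite_self, one_mul]
  refine Finset.sum_congr rfl (fun i _ => ?_)
  have h1 : ∀ x : Fin n, (i + x = k) ↔ (x = k - i) := by
    intro x
    constructor
    · intro h; rw [← h]; abel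
    · intro h; rw [h]; abel
  calc (∑ x : Fin n, if i + x = k then f i * g x else 0)
      = ∑ x : Fin n, if x = k - i then f i * g x else 0 :=
        Finset.sum_congr rfl (fun x _ => if_congr (h1 x) rfl rfl)
    _ = f i * g (k - i) := by simp

lemma ctStar_eq (f : Fin n → R) : ctStar 1 f = st f := by
  funext j
  simp [ctStar, st]

lemma conv_comm (f g : Fin n → R) : conv f g = conv g f := by
  funext k
  refine Fintype.sum_equiv (Equiv.subLeft k) _ _ (fun i => ?_)
  simp only [Equiv.subLeft_apply, sub_sub_cancel]
  ring

lemma conv_assoc (f g h : Fin n → R) : conv (conv f g) h = conv f (conv g h) := by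
  funext k
  simp only [conv, Finset.sum_mul, Finset.mul_sum]
  rw [Finset.sum_comm]
  refine Finset.sum_congr rfl (fun j _ => ?_)
  refine Fintype.sum_equiv (Equiv.subRight j) _ _ (fun i => ?_)
  simp only [Equiv.subRight_apply]
  rw [show k - j - (i - j) = k - i by abel]
  ring

lemma one'_conv (g : Fin n → R) : conv one' g = g := by
  funext k
  simp [conv, one', ite_mul]

lemma conv_one' (g : Fin n → R) : conv g one' = g := by
  rw [conv_comm, one'_conv]

lemma conv_add (f g h : Fin n → R) : conv f (g + h) = conv f g + conv f h := by
  funext k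
  simp [conv, mul_add, Finset.sum_add_distrib]

lemma add_conv (f g h : Fin n → R) : conv (f + g) h = conv f h + conv g h := by
  funext k
  simp [conv, add_mul, Finset.sum_add_distrib]

lemma zero_conv (g : Fin n → R) : conv 0 g = 0 := by
  funext k; simp [conv]

lemma conv_zero (g : Fin n → R) : conv g 0 = 0 := by
  funext k; simp [conv]

lemma st_conv (f g : Fin n → R) : st (conv f g) = conv (st f) (st g) := by
  funext k
  show (∑ i : Fin n, f i * g (-k - i)) = ∑ i : Fin n, st f i * st g (k - i)
  refine Fintype.sum_equiv (Equiv.neg (Fin n)) _ _ (fun i => ?_)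
  simp only [st, Equiv.neg_apply, neg_neg]
  rw [show -(k - -i) = -k - i by abel]

lemma st_add (f g : Fin n → R) : st (f + g) = st f + st g := by
  funext k; simp [st]

lemma st_one' : st (one' : Fin n → R) = one' := by
  funext k; simp [st, one', neg_eq_zero]

lemma st_st (f : Fin n → R) : st (st f) = f := by
  funext k; simp [st]

open Fin.NatCast in
lemma shift_mem (C : Submodule R (Fin n → R)) (hC : ∀ c ∈ C, cycShift c ∈ C)
    {x : Fin n → R} (hx : x ∈ C) (i : Fin n) : (fun t => x (t - i)) ∈ C := by
  have key : ∀ m : ℕ, (fun t => x (t - (m : Fin n))) ∈ C := by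
    intro m
    induction m with
    | zero => simpa using hx
    | succ m ih =>
      have h2 := hC _ ih
      have : cycShift (fun t => x (t - (m : Fin n))) =
          (fun t => x (t - ((m + 1 : ℕ) : Fin n))) := by
        funext t
        simp only [cycShift]
        congr 1
        push_cast
        abel
      rwa [this] at h2
  simpa [Fin.cast_val_eq_self] using key (i : ℕ)

lemma conv_mem (C : Submodule R (Fin n → R)) (hC : ∀ c ∈ C, cycShift c ∈ C)
    (a : Fin n → R) {x : Fin n → R} (hx : x ∈ C) : conv a x ∈ C := by
  have hrw : conv a x = ∑ i : Fin n, a i • (fun t => x (t - i)) := by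
    funext k
    simp [conv, Finset.sum_apply]
  rw [hrw]
  exact Submodule.sum_mem _ (fun i _ => C.smul_mem _ (shift_mem C hC hx i))

lemma conv_st_apply (x c : Fin n → R) (k : Fin n) :
    conv x (st c) k = ∑ i : Fin n, x i * c (i - k) := by
  simp only [conv, st]
  refine Finset.sum_congr rfl (fun i _ => ?_)
  rw [show -(k - i) = i - k by abel]


def GR (R : Type*) (n : ℕ) : Type _ := Fin n → R

instance : AddCommGroup (GR R n) := inferInstanceAs (AddCommGroup (Fin n → R))
instance [Fintype R] : Finite (GR R n) := inferInstanceAs (Finite (Fin n → R))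

instance : CommRing (GR R n) where
  __ := (inferInstance : AddCommGroup (GR R n))
  mul := conv
  one := one'
  mul_assoc := conv_assoc
  one_mul := one'_conv
  mul_one := conv_one'
  left_distrib := conv_add
  right_distrib := fun f g h => add_conv f g h
  zero_mul := zero_conv
  mul_zero := conv_zero
  mul_comm := conv_comm

lemma gr_mul_def (f g : GR R n) : f * g = conv f g := rfl
lemma gr_one_def : (1 : GR R n) = one' := rfl

def stHom : GR R n →+* GR R n where
  toFun := st
  map_one' := st_one'
  map_mul' := st_conv
  map_zero' := by funext k; simp [st]; rfl
  map_add' := st_add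

lemma stHom_invol : Function.Involutive (stHom : GR R n →+* GR R n) := st_st

end LCDC


open LCDC in
/-- Over a finite commutative chain ring `R` with `gcd(n, char(R/J(R))) = 1`,
a cyclic code `C ⊆ Rⁿ` (identified with an ideal of the group ring `RC_n`,
i.e. `R^{γ_1} C_n`) is LCD for the Euclidean inner product iff `C = ⟨e⟩` for
an idempotent `e` with `e* = e`. -/
theorem cyclic_LCD_iff_idempotent {R : Type*} [CommRing R]
    [Fintype R] [IsLocalRing R]
    (hchain : (IsLocalRing.maximalIdeal R).IsPrincipal)
    {n : ℕ} [NeZero n]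
    (hn : Nat.gcd n (ringChar (IsLocalRing.ResidueField R)) = 1)
    (C : Submodule R (Fin n → R))
    (hC : ∀ c ∈ C, cycShift c ∈ C) :
    (∀ x ∈ C, (∀ c ∈ C, ∑ i : Fin n, x i * c i = 0) → x = 0) ↔
      ∃ e : Fin n → R, ctMul 1 e e = e ∧ ctStar 1 e = e ∧
        (∀ x, x ∈ C ↔ ∃ a : Fin n → R, x = ctMul 1 a e) := by
  classical
  constructor
  · intro H
    let CI : Ideal (GR R n) :=
      { carrier := show Set (GR R n) from (C : Set (Fin n → R))
        add_mem' := fun {a b} ha hb => C.add_mem ha hb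
        zero_mem' := C.zero_mem
        smul_mem' := fun c {x} hx => conv_mem C hC c hx }
    have H' : ∀ x ∈ CI, (∀ c ∈ CI, x * stHom c = 0) → x = 0 := by
      intro x hx hall
      refine H x hx ?_
      intro c hc
      have h1 : conv x (st c) = 0 := hall c hc
      have h2 : (∑ i : Fin n, x i * c i) = conv x (st c) 0 := by
        refine Eq.trans ?_ (conv_st_apply x c 0).symm
        exact Finset.sum_congr rfl (fun i _ => by rw [sub_zero])
      rw [h2, h1]; rfl
    obtain ⟨e, he2, hse, hspan⟩ := LCDAux.abstract_LCD stHom stHom_invol CI H'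
    refine ⟨e, ?_, ?_, ?_⟩
    · exact (ctMul_eq e e).trans he2
    · exact (ctStar_eq e).trans hse
    · intro x
      have hx1 : x ∈ C ↔ (show GR R n from x) ∈ Ideal.span {e} := by
        rw [← hspan]; exact Iff.rfl
      rw [hx1, Ideal.mem_span_singleton]
      constructor
      · rintro ⟨a, ha⟩
        refine ⟨a, ?_⟩
        exact ha.trans ((conv_comm e a).trans (ctMul_eq a e).symm)
      · rintro ⟨a, ha⟩
        refine ⟨a, ?_⟩
        replace ha := ha.trans (ctMul_eq a e)
        exact ha.trans (conv_comm a e)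
  · rintro ⟨e, he2, hse, hmem⟩
    rw [ctMul_eq] at he2
    rw [ctStar_eq] at hse
    intro x hxC hperp
    have heC : e ∈ C := (hmem e).mpr ⟨one', by rw [ctMul_eq, one'_conv]⟩
    have hx0 : ∀ c ∈ C, conv x (st c) = 0 := by
      intro c hc
      funext k
      rw [conv_st_apply]
      have hsft : (fun t => c (t - k)) ∈ C := shift_mem C hC hc k
      have h3 := hperp _ hsft
      simpa using h3
    have h1 : conv x e = 0 := by
      have h4 := hx0 e heC
      rwa [hse] at h4
    obtain ⟨a, ha⟩ := (hmem x).mp hxC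
    rw [ctMul_eq] at ha
    have h2 : x = conv x e := by
      rw [ha, conv_assoc, he2]
    rw [h2]
    exact h1
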